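/- Let S = (ℕ, max), viewed as a commutative discrete semigroup. For the Banach algebra A = ℓ^1(S) with convolution δ_s * δ_t = δ_{max(s,t)}, the space of weakly almost periodic functionals satisfies WAP(ℓ^∞(S)) = c_0(ℕ) ⊕ ℂ·1, where 1 is the constant function one. -/
import Mathlib


open Filter

/-- The weak almost periodicity condition for `f ∈ ℓ^∞(ℕ, max)`: for all ultrafilters `ω, υ` on
`ℕ`, the two iterated (Arens-type) limits of `f (max s t)` agree. -/
def WAPmax (f : ℕ → ℝ) : Prop :=
  ∀ (ω υ : Ultrafilter ℕ) (g k : ℕ → ℝ) (L M : ℝ),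
    (∀ s, Tendsto (fun t => f (max s t)) ↑υ (nhds (g s))) → Tendsto g ↑ω (nhds L) →
    (∀ t, Tendsto (fun s => f (max s t)) ↑ω (nhds (k t))) → Tendsto k ↑υ (nhds M) →
    L = M

/-- Along a nonprincipal ultrafilter, `t ↦ f (max s t)` has the same limit as `f`. -/
lemma tendsto_max_right {f : ℕ → ℝ} {c : ℝ} (hf : Tendsto f cofinite (nhds c))
    {u : Ultrafilter ℕ} (hu : (u : Filter ℕ) ≤ cofinite) (s : ℕ) :
    Tendsto (fun t => f (max s t)) ↑u (nhds c) := by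
  have h1 : ∀ᶠ t in (cofinite : Filter ℕ), s ≤ t := by
    rw [Nat.cofinite_eq_atTop]; exact eventually_ge_atTop s
  have heq : ∀ᶠ t in ↑u, f t = f (max s t) :=
    (h1.filter_mono hu).mono fun t ht => by rw [max_eq_right ht]
  exact (hf.mono_left hu).congr' heq

/-- A bounded real sequence converges along every ultrafilter. -/
lemma exists_ultrafilter_lim (f : ℕ → ℝ) (C : ℝ) (hC : ∀ n, |f n| ≤ C) (u : Ultrafilter ℕ) :
    ∃ c, Tendsto f ↑u (nhds c) := by
  have h1 : ↑(u.map f) ≤ 𝓟 (Set.Icc (-C) C) := by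
    rw [Ultrafilter.coe_map, le_principal_iff, mem_map]
    have : f ⁻¹' Set.Icc (-C) C = Set.univ := by
      ext n
      simp only [Set.mem_preimage, Set.mem_Icc, Set.mem_univ, iff_true]
      exact abs_le.mp (hC n)
    rw [this]; exact univ_mem
  obtain ⟨c, -, hc⟩ := (isCompact_Icc (a := -C) (b := C)).ultrafilter_le_nhds (u.map f) h1
  exact ⟨c, by rwa [Ultrafilter.coe_map] at hc⟩

/-- For `S = (ℕ, max)`, the weakly almost periodic functionals on `ℓ^1(S)` are exactly
`WAP(ℓ^∞(S)) = c₀(ℕ) ⊕ ℂ·1`: a bounded function satisfies the WAP iterated-limit condition iff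
it is the sum of a function vanishing at infinity and a constant. -/
theorem wap_max_eq_c0_plus_constants :
    {f : ℕ → ℝ | (∃ C, ∀ n, |f n| ≤ C) ∧ WAPmax f} =
      {f : ℕ → ℝ | ∃ (g : ℕ → ℝ) (c : ℝ),
        Tendsto g cofinite (nhds 0) ∧ f = fun n => g n + c} := by
  ext f
  simp only [Set.mem_setOf_eq]
  constructor
  · rintro ⟨⟨C, hC⟩, hW⟩
    set U : Ultrafilter ℕ := Ultrafilter.of (cofinite : Filter ℕ) with hUdef
    have hU : (U : Filter ℕ) ≤ cofinite := Ultrafilter.of_le _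
    obtain ⟨c, hc⟩ := exists_ultrafilter_lim f C hC U
    have hfc : Tendsto f cofinite (nhds c) := by
      rw [tendsto_iff_ultrafilter]
      intro u hu
      obtain ⟨M, hM⟩ := exists_ultrafilter_lim f C hC u
      -- along u, t ↦ f (max s t) → M ; along U, s ↦ f (max s t) → c
      have hg : ∀ s, Tendsto (fun t => f (max s t)) ↑u (nhds M) := by
        intro s
        have h1 : ∀ᶠ t in (cofinite : Filter ℕ), s ≤ t := by
          rw [Nat.cofinite_eq_atTop]; exact eventually_ge_atTop s
        exact (hM.congr' ((h1.filter_mono hu).mono fun t ht => by show f t = f (max s t); rw [max_eq_right ht]))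
      have hk : ∀ t, Tendsto (fun s => f (max s t)) ↑U (nhds c) := by
        intro t
        have h1 : ∀ᶠ s in (cofinite : Filter ℕ), t ≤ s := by
          rw [Nat.cofinite_eq_atTop]; exact eventually_ge_atTop t
        exact hc.congr' ((h1.filter_mono hU).mono fun s hs => by show f s = f (max s t); rw [max_eq_left hs])
      have key : M = c :=
        hW U u (fun _ => M) (fun _ => c) M c hg tendsto_const_nhds hk tendsto_const_nhds
      rwa [key] at hM
    refine ⟨fun n => f n - c, c, ?_, by funext n; ring⟩
    simpa using hfc.sub_const c
  · rintro ⟨g, c, hg, rfl⟩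
    have hfc : Tendsto (fun n => g n + c) cofinite (nhds c) := by
      simpa using hg.add_const c
    constructor
    · -- boundedness
      have h1 : ∀ᶠ n in (cofinite : Filter ℕ), |g n| ≤ 1 := by
        have := hg.eventually (eventually_le_nhds (by norm_num : (0:ℝ) < 1))
        filter_upwards [hg (Metric.closedBall_mem_nhds (0:ℝ) (by norm_num : (0:ℝ) < 1))] with n hn
        simpa [Real.dist_eq] using hn
      rw [Nat.cofinite_eq_atTop, eventually_atTop] at h1
      obtain ⟨N, hN⟩ := h1
      refine ⟨1 + (∑ i ∈ Finset.range N, |g i|) + |c|, fun n => ?_⟩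
      have hsum : (0:ℝ) ≤ ∑ i ∈ Finset.range N, |g i| :=
        Finset.sum_nonneg fun i _ => abs_nonneg _
      have hgn : |g n| ≤ 1 + ∑ i ∈ Finset.range N, |g i| := by
        rcases lt_or_ge n N with h | h
        · have := Finset.single_le_sum (f := fun i => |g i|)
            (fun i _ => abs_nonneg _) (Finset.mem_range.mpr h)
          linarith
        · have := hN n h
          linarith
      calc |g n + c| ≤ |g n| + |c| := abs_add_le _ _
        _ ≤ 1 + (∑ i ∈ Finset.range N, |g i|) + |c| := by linarith
    · -- WAP condition
      intro ω υ g' k L M hg' hL hk hM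
      set f : ℕ → ℝ := fun n => g n + c with hfdef
      rcases υ.le_cofinite_or_eq_pure with hυ | ⟨t₀, rfl⟩
      · -- υ nonprincipal : g' s = c for all s, so L = c
        have hg'c : ∀ s, g' s = c := fun s =>
          tendsto_nhds_unique (hg' s) (tendsto_max_right hfc hυ s)
        have hLc : L = c :=
          tendsto_nhds_unique hL (by simpa [funext hg'c] using (tendsto_const_nhds :
            Tendsto (fun _ : ℕ => c) ↑ω (nhds c)))
        rcases ω.le_cofinite_or_eq_pure with hω | ⟨s₀, rfl⟩
        · -- k t = c for all t, M = c
          have hkc : ∀ t, k t = c := fun t =>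
            tendsto_nhds_unique (hk t)
              (((tendsto_max_right hfc hω t)).congr fun s => by rw [max_comm])
          have hMc : M = c :=
            tendsto_nhds_unique hM (by simpa [funext hkc] using (tendsto_const_nhds :
              Tendsto (fun _ : ℕ => c) ↑υ (nhds c)))
          rw [hLc, hMc]
        · -- ω = pure s₀ : k t = f (max s₀ t), M = lim_{t→υ} f (max s₀ t) = c
          have hkc : ∀ t, k t = f (max s₀ t) := fun t =>
            tendsto_nhds_unique (hk t) (by
              simpa using (tendsto_pure_nhds (fun s => f (max s t)) s₀))
          have hMc : M = c := by
            refine tendsto_nhds_unique hM ?_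
            have := tendsto_max_right hfc hυ s₀
            simpa [funext hkc] using this
          rw [hLc, hMc]
      · -- υ = pure t₀ : g' s = f (max s t₀)
        have hg'v : ∀ s, g' s = f (max s t₀) := fun s =>
          tendsto_nhds_unique (hg' s) (by
            simpa using (tendsto_pure_nhds (fun t => f (max s t)) t₀))
        rcases ω.le_cofinite_or_eq_pure with hω | ⟨s₀, rfl⟩
        · -- L = lim_{s→ω} f (max s t₀) = c ; k t = c, M = c
          have hLc : L = c := by
            refine tendsto_nhds_unique hL ?_
            have := ((tendsto_max_right hfc hω t₀)).congr
              (fun s => by rw [max_comm] : ∀ s, f (max t₀ s) = f (max s t₀))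
            simpa [funext hg'v] using this
          have hkc : ∀ t, k t = c := fun t =>
            tendsto_nhds_unique (hk t)
              (((tendsto_max_right hfc hω t)).congr fun s => by rw [max_comm])
          have hMc : M = c :=
            tendsto_nhds_unique hM (by simpa [funext hkc] using (tendsto_const_nhds :
              Tendsto (fun _ : ℕ => c) ↑(pure t₀ : Ultrafilter ℕ) (nhds c)))
          rw [hLc, hMc]
        · -- both pure : L = f (max s₀ t₀) = M
          have hLv : L = f (max s₀ t₀) :=
            tendsto_nhds_unique hL (by
              simpa [funext hg'v] using (tendsto_pure_nhds (fun s => f (max s t₀)) s₀))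
          have hkc : ∀ t, k t = f (max s₀ t) := fun t =>
            tendsto_nhds_unique (hk t) (by
              simpa using (tendsto_pure_nhds (fun s => f (max s t)) s₀))
          have hMv : M = f (max s₀ t₀) :=
            tendsto_nhds_unique hM (by
              simpa [funext hkc] using (tendsto_pure_nhds (fun t => f (max s₀ t)) t₀))
          rw [hLv, hMv]
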